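/- With the notation above, if b₂ > b₁ > 1 and w_{b₁}(0) ≥ w_{b₂}(0) with w_{b₁}(0) > w_{b₂}(0) (strict monotonicity of b ↦ w_b(0) on (1,∞)), and each w_b is extended linearly by w_b(x) = x - b + μ/r for x ≥ b, then w_{b₂}(x) < w_{b₁}(x) for all x ≥ 0. -/

import Mathlib

open Set

lemma aux_gronwall_zero (u β : ℝ → ℝ) (σ r a b M : ℝ) (hσ2 : 0 < σ ^ 2) (hr : 0 < r)
    (hab : a ≤ b) (hud : Differentiable ℝ u) (hud' : Differentiable ℝ (deriv u))
    (hM : ∀ t ∈ Icc a b, |β t| ≤ M) (hM0 : 0 ≤ M)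
    (hode : ∀ t ∈ Icc a b, σ ^ 2 / 2 * deriv (deriv u) t + β t * deriv u t - r * u t = 0)
    (ha : u a = 0) (ha' : deriv u a = 0) : u b = 0 := by
  obtain ⟨K, hK⟩ : ∃ K : ℝ, K = 1 + 2 / σ ^ 2 * (r + M) := ⟨_, rfl⟩
  have hKnn : 0 ≤ 2 / σ ^ 2 * (r + M) :=
    mul_nonneg (by positivity) (by linarith)
  have hK1 : (1:ℝ) ≤ K := by rw [hK]; linarith
  have hbd : ∀ t ∈ Ico a b,
      ‖((deriv u t, deriv (deriv u) t) : ℝ × ℝ)‖ ≤ K * ‖((u t, deriv u t) : ℝ × ℝ)‖ + 0 := by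
    intro t ht
    have htm : t ∈ Icc a b := ⟨ht.1, ht.2.le⟩
    have h := hode t htm
    have hβ := hM t htm
    have hN : ‖((u t, deriv u t) : ℝ × ℝ)‖ = max |u t| |deriv u t| := by
      simp [Prod.norm_def, Real.norm_eq_abs]
    have hN' : ‖((deriv u t, deriv (deriv u) t) : ℝ × ℝ)‖ = max |deriv u t| |deriv (deriv u) t| := by
      simp [Prod.norm_def, Real.norm_eq_abs]
    have h1 : |u t| ≤ max |u t| |deriv u t| := le_max_left _ _
    have h2 : |deriv u t| ≤ max |u t| |deriv u t| := le_max_right _ _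
    have hV0 : 0 ≤ max |u t| |deriv u t| := le_trans (abs_nonneg _) h1
    have hdd : deriv (deriv u) t = 2 / σ ^ 2 * (r * u t - β t * deriv u t) := by
      rw [div_mul_eq_mul_div, eq_div_iff hσ2.ne']
      linear_combination (2:ℝ) * h
    have h3 : |deriv (deriv u) t| ≤ 2 / σ ^ 2 * (r + M) * max |u t| |deriv u t| := by
      rw [hdd, abs_mul, abs_of_nonneg (by positivity : (0:ℝ) ≤ 2 / σ ^ 2), mul_assoc]
      apply mul_le_mul_of_nonneg_left _ (by positivity : (0:ℝ) ≤ 2 / σ ^ 2)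
      calc |r * u t - β t * deriv u t| ≤ |r * u t| + |β t * deriv u t| := abs_sub _ _
        _ = r * |u t| + |β t| * |deriv u t| := by rw [abs_mul, abs_mul, abs_of_nonneg hr.le]
        _ ≤ r * max |u t| |deriv u t| + M * max |u t| |deriv u t| := by
            have e1 : r * |u t| ≤ r * max |u t| |deriv u t| :=
              mul_le_mul_of_nonneg_left h1 hr.le
            have e2 : |β t| * |deriv u t| ≤ M * max |u t| |deriv u t| :=
              mul_le_mul hβ h2 (abs_nonneg _) hM0
            linarith
        _ = (r + M) * max |u t| |deriv u t| := by ring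
    rw [hN', hN, add_zero]
    apply max_le
    · exact h2.trans (le_mul_of_one_le_left hV0 hK1)
    · refine h3.trans (mul_le_mul_of_nonneg_right ?_ hV0)
      rw [hK]; linarith
  have hgr := norm_le_gronwallBound_of_norm_deriv_right_le
    (f := fun t => ((u t, deriv u t) : ℝ × ℝ))
    (f' := fun t => ((deriv u t, deriv (deriv u) t) : ℝ × ℝ))
    (δ := 0) (K := K) (ε := 0) (a := a) (b := b)
    ((hud.continuous.prodMk hud'.continuous).continuousOn)
    (fun t _ => (((hud t).hasDerivAt.prodMk (hud' t).hasDerivAt)).hasDerivWithinAt)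
    (by simp [ha, ha', Prod.norm_def]) hbd b ⟨hab, le_rfl⟩
  rw [gronwallBound_ε0, zero_mul] at hgr
  have h1 : |u b| ≤ ‖((u b, deriv u b) : ℝ × ℝ)‖ := by
    simp only [Prod.norm_def, Real.norm_eq_abs]
    exact le_max_left _ _
  have := le_trans h1 hgr
  exact abs_eq_zero.1 (le_antisymm this (abs_nonneg _))

theorem stmt_8 (μ σ r : ℝ) (hσ : 0 < σ) (hr : 0 < r) (hμr : r < μ)
    (α : ℝ → ℝ) (hα : ContDiff ℝ 1 α) (hαconv : ConvexOn ℝ (Ici 0) α)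
    (hαmono : StrictMonoOn α (Ici 0)) (hα0 : α 0 = 0)
    (hα' : ∀ x ≥ (0:ℝ), r ≤ deriv α x)
    (b₁ b₂ : ℝ) (hb₁ : 1 < b₁) (hb₁₂ : b₁ < b₂)
    (w₁ w₂ : ℝ → ℝ) (hw₁ : ContDiff ℝ 2 w₁) (hw₂ : ContDiff ℝ 2 w₂)
    (hode₁ : ∀ x ∈ Icc (0:ℝ) b₁,
      σ ^ 2 / 2 * deriv (deriv w₁) x + (μ - α (max (1 - x) 0)) * deriv w₁ x - r * w₁ x = 0)
    (hode₂ : ∀ x ∈ Icc (0:ℝ) b₂,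
      σ ^ 2 / 2 * deriv (deriv w₂) x + (μ - α (max (1 - x) 0)) * deriv w₂ x - r * w₂ x = 0)
    (hv₁ : w₁ b₁ = μ / r) (hv₂ : w₂ b₂ = μ / r)
    (hd₁ : deriv w₁ b₁ = 1) (hd₂ : deriv w₂ b₂ = 1)
    (hdd₁ : deriv (deriv w₁) b₁ = 0) (hdd₂ : deriv (deriv w₂) b₂ = 0)
    (hlin₁ : ∀ x ≥ b₁, w₁ x = x - b₁ + μ / r) (hlin₂ : ∀ x ≥ b₂, w₂ x = x - b₂ + μ / r)
    (hconc₁ : ConcaveOn ℝ (Icc 1 b₁) w₁) (hconc₂ : ConcaveOn ℝ (Icc 1 b₂) w₂)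
    (hd1ge : ∀ x ∈ Icc (1:ℝ) b₁, 1 ≤ deriv w₁ x) (hd2ge : ∀ x ∈ Icc (1:ℝ) b₂, 1 ≤ deriv w₂ x)
    (h0 : w₂ 0 < w₁ 0) :
    ∀ x ≥ (0:ℝ), w₂ x < w₁ x := by
  have hσ2 : (0:ℝ) < σ ^ 2 := by positivity
  -- basic differentiability facts
  have hw₁d : Differentiable ℝ w₁ := hw₁.differentiable (by norm_num)
  have hw₂d : Differentiable ℝ w₂ := hw₂.differentiable (by norm_num)
  have hderC : ∀ w : ℝ → ℝ, ContDiff ℝ 2 w → Differentiable ℝ w ∧ ContDiff ℝ 1 (deriv w) := by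
    intro w h
    have h2 : ContDiff ℝ ((1:ℕ∞)+1) w := by exact_mod_cast h
    rw [contDiff_succ_iff_deriv] at h2
    exact ⟨h2.1, h2.2.2⟩
  have hw₁d' : Differentiable ℝ (deriv w₁) := (hderC w₁ hw₁).2.differentiable (by norm_num)
  have hw₂d' : Differentiable ℝ (deriv w₂) := (hderC w₂ hw₂).2.differentiable (by norm_num)
  set u : ℝ → ℝ := fun x => w₁ x - w₂ x with hu_def
  have hcu : ContDiff ℝ 2 u := hw₁.sub hw₂
  have hud : Differentiable ℝ u := hcu.differentiable (by norm_num)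
  have hdu : deriv u = fun x => deriv w₁ x - deriv w₂ x := by
    funext x; exact deriv_sub (hw₁d x) (hw₂d x)
  have hud' : Differentiable ℝ (deriv u) := (hderC u hcu).2.differentiable (by norm_num)
  have hddu : ∀ x, deriv (deriv u) x = deriv (deriv w₁) x - deriv (deriv w₂) x := by
    intro x; rw [hdu]; exact deriv_sub (hw₁d' x) (hw₂d' x)
  have hcu'' : Continuous (deriv (deriv u)) := (hderC u hcu).2.continuous_deriv le_rfl
  -- coefficient β
  set β : ℝ → ℝ := fun x => μ - α (max (1 - x) 0) with hβ_def
  have hβc : Continuous β :=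
    continuous_const.sub (hα.continuous.comp ((continuous_const.sub continuous_id).max continuous_const))
  -- ODE for u on [0, b₁]
  have hodeu : ∀ x ∈ Icc (0:ℝ) b₁,
      σ ^ 2 / 2 * deriv (deriv u) x + β x * deriv u x - r * u x = 0 := by
    intro x hx
    have h1 := hode₁ x hx
    have h2 := hode₂ x ⟨hx.1, hx.2.trans hb₁₂.le⟩
    rw [hddu, hdu]
    simp only [hu_def, hβ_def]
    ring_nf
    ring_nf at h1 h2
    linarith
  -- MVT bound for w₂ on [b₁, b₂)
  have hmvt : ∀ x, b₁ ≤ x → x < b₂ → w₂ x ≤ x - b₂ + μ / r := by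
    intro x hx1 hx2
    obtain ⟨c, hc, hcs⟩ := exists_hasDerivAt_eq_slope w₂ (deriv w₂) hx2
      hw₂d.continuous.continuousOn (fun y _ => (hw₂d y).hasDerivAt)
    have hc1 : 1 ≤ deriv w₂ c :=
      hd2ge c ⟨(hb₁.le.trans hx1).trans hc.1.le, hc.2.le⟩
    rw [hcs, hv₂] at hc1
    have hbx : 0 < b₂ - x := by linarith
    rw [le_div_iff₀ hbx] at hc1
    linarith
  have hub₁ : 0 < u b₁ := by
    have := hmvt b₁ le_rfl hb₁₂
    simp only [hu_def, hv₁]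
    linarith
  have hu0 : 0 < u 0 := by simp only [hu_def]; linarith
  -- bound on β on [0, b₁]
  obtain ⟨M, hM⟩ := isCompact_Icc.exists_bound_of_continuousOn
    (hβc.continuousOn : ContinuousOn β (Icc (0:ℝ) b₁))
  have hM' : ∀ x ∈ Icc (0:ℝ) b₁, |β x| ≤ M := fun x hx => by
    have := hM x hx; rwa [Real.norm_eq_abs] at this
  have hM0 : 0 ≤ M := le_trans (abs_nonneg _) (hM' 0 ⟨le_rfl, by linarith⟩)
  have hu_eq : ∀ x, u x = w₁ x - w₂ x := fun _ => rfl
  clear_value u β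
  -- the maximum principle on [0, b₁]
  have key : ∀ x ∈ Icc (0:ℝ) b₁, 0 < u x := by
    have hne : (Icc (0:ℝ) b₁).Nonempty := ⟨0, le_rfl, by linarith⟩
    obtain ⟨x₀, hx₀mem, hx₀min⟩ := isCompact_Icc.exists_isMinOn hne hud.continuous.continuousOn
    intro x hx
    by_contra hcon
    push_neg at hcon
    have hmin0 : u x₀ ≤ 0 := le_trans (hx₀min hx) hcon
    have hx₀0 : x₀ ≠ 0 := fun h => by rw [h] at hmin0; linarith
    have hx₀b : x₀ ≠ b₁ := fun h => by rw [h] at hmin0; linarith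
    have hx₀i : x₀ ∈ Ioo (0:ℝ) b₁ :=
      ⟨lt_of_le_of_ne hx₀mem.1 (Ne.symm hx₀0), lt_of_le_of_ne hx₀mem.2 hx₀b⟩
    have hloc : IsLocalMin u x₀ := hx₀min.isLocalMin (Icc_mem_nhds hx₀i.1 hx₀i.2)
    have hdu0 : deriv u x₀ = 0 := hloc.deriv_eq_zero
    have hodex₀ := hodeu x₀ hx₀mem
    rw [hdu0] at hodex₀
    rcases lt_or_eq_of_le hmin0 with hneg | hzero
    · -- u x₀ < 0 : second derivative is negative, contradiction with the minimum
      have hdd : deriv (deriv u) x₀ < 0 := by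
        by_contra hge
        push_neg at hge
        have h1 : 0 ≤ σ ^ 2 / 2 * deriv (deriv u) x₀ :=
          mul_nonneg (by positivity) hge
        have h2 : r * u x₀ < 0 := mul_neg_of_pos_of_neg hr hneg
        linarith
      obtain ⟨ε, hε, hball⟩ := Metric.isOpen_iff.1
        (isOpen_lt hcu'' continuous_const) x₀ hdd
      set δ : ℝ := min (ε/2) ((b₁ - x₀)/2) with hδ_def
      have hδ0 : 0 < δ := by
        apply lt_min (by linarith)
        have := hx₀i.2; linarith
      have hδε : δ ≤ ε / 2 := min_le_left _ _
      have hδb : δ ≤ (b₁ - x₀) / 2 := min_le_right _ _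
      have hsub : Icc x₀ (x₀ + δ) ⊆ Metric.ball x₀ ε := by
        intro y hy
        rw [Metric.mem_ball, Real.dist_eq, abs_lt]
        exact ⟨by linarith [hy.1], by linarith [hy.2]⟩
      have hanti' : StrictAntiOn (deriv u) (Icc x₀ (x₀ + δ)) := by
        apply strictAntiOn_of_deriv_neg (convex_Icc _ _) hud'.continuous.continuousOn
        intro y hy
        rw [interior_Icc] at hy
        exact hball (hsub ⟨hy.1.le, hy.2.le⟩)
      have hanti : StrictAntiOn u (Icc x₀ (x₀ + δ)) := by
        apply strictAntiOn_of_deriv_neg (convex_Icc _ _) hud.continuous.continuousOn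
        intro y hy
        rw [interior_Icc] at hy
        have := hanti' ⟨le_rfl, by linarith⟩ ⟨hy.1.le, hy.2.le⟩ hy.1
        rw [hdu0] at this
        exact this
      have hlt : u (x₀ + δ) < u x₀ :=
        hanti ⟨le_rfl, by linarith⟩ ⟨by linarith, le_rfl⟩ (by linarith)
      have hmem' : x₀ + δ ∈ Icc (0:ℝ) b₁ := ⟨by linarith [hx₀mem.1], by linarith⟩
      exact absurd hlt (not_lt.2 (hx₀min hmem'))
    · -- u x₀ = 0 : Grönwall / uniqueness argument
      have hub₁' : u b₁ = 0 := by
        apply aux_gronwall_zero u β σ r x₀ b₁ M hσ2 hr hx₀mem.2 hud hud'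
          (fun t ht => hM' t ⟨le_trans hx₀mem.1 ht.1, ht.2⟩) hM0
          (fun t ht => hodeu t ⟨le_trans hx₀mem.1 ht.1, ht.2⟩)
          hzero hdu0
      linarith
  -- conclude
  intro x hx
  rcases lt_or_ge x b₁ with h | h
  · have := key x ⟨hx, h.le⟩
    rw [hu_eq] at this
    linarith
  · rcases lt_or_ge x b₂ with h' | h'
    · have := hmvt x h h'
      rw [hlin₁ x h]
      linarith
    · rw [hlin₁ x (le_trans hb₁₂.le h'), hlin₂ x h']
      linarith
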